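/- Let (f_n) : (G_n,p_n) → (H_n,q_n) be a level morphism of inverse sequences of groups (q_n ∘ f_{n+1} = f_n ∘ p_n for all n) such that the induced map f̃ : lim← G_n → lim← H_n between inverse limits is surjective. If (H_n, q_n) is Mittag-Leffler, then for every n there exists m ≥ n such that q_{nm}(H_m) ⊆ Im(f_n). -/
import Mathlib


/-- Composite bonding map `p_{n m} : X_m → X_n` (for `n ≤ m`) of an inverse
sequence `(X_n, p_n)`. -/
def tbond (X : ℕ → Type u) (p : ∀ n, X (n + 1) → X n) {n m : ℕ} (h : n ≤ m) :
    X m → X n :=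
  Nat.leRecOn h (fun {k} (g : X k → X n) (x : X (k + 1)) => g (p k x)) id

lemma tbond_self (X : ℕ → Type u) (p : ∀ n, X (n + 1) → X n) {n : ℕ} (h : n ≤ n) (x : X n) :
    tbond X p h x = x := by
  unfold tbond; rw [Nat.leRecOn_self]; rfl

lemma tbond_succ (X : ℕ → Type u) (p : ∀ n, X (n + 1) → X n) {n m : ℕ} (h : n ≤ m)
    (h' : n ≤ m + 1) (x : X (m + 1)) : tbond X p h' x = tbond X p h (p m x) := by
  unfold tbond; rw [Nat.leRecOn_succ h]

lemma tbond_comp (X : ℕ → Type u) (p : ∀ n, X (n + 1) → X n) {n m k : ℕ} (h1 : n ≤ m)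
    (h2 : m ≤ k) (x : X k) :
    tbond X p h1 (tbond X p h2 x) = tbond X p (h1.trans h2) x := by
  induction k, h2 using Nat.le_induction with
  | base => rw [tbond_self]
  | succ k hk ih => rw [tbond_succ X p hk, tbond_succ X p (h1.trans hk), ih]

lemma tbond_cons (X : ℕ → Type u) (p : ∀ n, X (n + 1) → X n) {n m : ℕ} (h : n + 1 ≤ m)
    (x : X m) : p n (tbond X p h x) = tbond X p ((Nat.le_succ n).trans h) x := by
  have := tbond_comp X p (Nat.le_succ n) h x
  rw [← this, tbond_succ X p (Nat.le_refl n) (Nat.le_succ n), tbond_self]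

noncomputable def threadAux (X : ℕ → Type u) (p : ∀ n, X (n + 1) → X n)
    (S : ∀ j, Set (X j)) (F : ∀ j, (x : X j) → x ∈ S j → X (j + 1))
    (hF1 : ∀ j x hx, F j x hx ∈ S (j + 1)) (n : ℕ) (x₀ : X n) (hx₀ : x₀ ∈ S n) :
    ∀ j, {y : X j // (∀ hjn : j ≤ n, y = tbond X p hjn x₀) ∧ (n ≤ j → y ∈ S j)}
  | 0 => ⟨tbond X p (Nat.zero_le n) x₀, fun _ => rfl, fun hn0 => by
      have hn : n = 0 := Nat.le_zero.mp hn0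
      subst hn; rw [tbond_self]; exact hx₀⟩
  | (j + 1) =>
    if hle : j + 1 ≤ n then
      ⟨tbond X p hle x₀, fun _ => rfl, fun hge => by
        have hn : n = j + 1 := le_antisymm hge hle
        subst hn; rw [tbond_self]; exact hx₀⟩
    else
      have hnj : n ≤ j := Nat.lt_succ_iff.mp (Nat.lt_of_not_le hle)
      let t := threadAux X p S F hF1 n x₀ hx₀ j
      ⟨F j t.1 (t.2.2 hnj), fun hjn => absurd hjn hle, fun _ => hF1 _ _ _⟩

lemma exists_thread (X : ℕ → Type u) (p : ∀ n, X (n + 1) → X n) (S : ∀ j, Set (X j))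
    (hS : ∀ j, ∀ x ∈ S j, ∃ y ∈ S (j + 1), p j y = x)
    {n : ℕ} (x₀ : X n) (hx₀ : x₀ ∈ S n) :
    ∃ h : ∀ j, X j, (∀ j, p j (h (j + 1)) = h j) ∧ h n = x₀ := by
  choose F hF1 hF2 using hS
  set t := threadAux X p S F hF1 n x₀ hx₀ with ht
  refine ⟨fun j => (t j).1, fun j => ?_, ?_⟩
  · show p j (t (j + 1)).1 = (t j).1
    by_cases hle : j + 1 ≤ n
    · have h1 : (t (j + 1)).1 = tbond X p hle x₀ := (t (j + 1)).2.1 hle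
      have h2 : (t j).1 = tbond X p ((Nat.le_succ j).trans hle) x₀ := (t j).2.1 _
      rw [h1, h2, tbond_cons X p hle]
    · have hnj : n ≤ j := Nat.lt_succ_iff.mp (Nat.lt_of_not_le hle)
      have : t (j + 1) = threadAux X p S F hF1 n x₀ hx₀ (j + 1) := rfl
      rw [this, threadAux, dif_neg hle]
      exact hF2 _ _ _
  · show (t n).1 = x₀
    have := (t n).2.1 (le_refl n)
    rw [this, tbond_self]

/-- The Mittag-Leffler property for an inverse sequence of sets: for every
`n₀` there is `n₁ > n₀` such that the image of `X_n` in `X_{n₀}` equals the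
image of `X_{n₁}` in `X_{n₀}` for all `n > n₁`. -/
def IsML (X : ℕ → Type u) (p : ∀ n, X (n + 1) → X n) : Prop :=
  ∀ n₀ : ℕ, ∃ n₁ : ℕ, ∃ h₁ : n₀ < n₁, ∀ n : ℕ, ∀ h : n₁ < n,
    Set.range (tbond X p (h₁.le.trans h.le)) = Set.range (tbond X p h₁.le)

/-- Condition (E) for epimorphisms: if a level morphism `(f_n)` of inverse
sequences of groups induces a surjection between the inverse limits and the
target sequence is Mittag-Leffler, then for every `n` there is `m ≥ n` with
`q_{nm}(H_m) ⊆ Im(f_n)`. -/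
theorem level_morphism_surjective_limit_epi_condition
    (G H : ℕ → Type u) [∀ n, Group (G n)] [∀ n, Group (H n)]
    (p : ∀ n, G (n + 1) →* G n) (q : ∀ n, H (n + 1) →* H n)
    (f : ∀ n, G n →* H n)
    (hlev : ∀ n (x : G (n + 1)), q n (f (n + 1) x) = f n (p n x))
    (hsurj : ∀ h : ∀ n, H n, (∀ n, q n (h (n + 1)) = h n) →
      ∃ g : ∀ n, G n, (∀ n, p n (g (n + 1)) = g n) ∧ ∀ n, f n (g n) = h n)
    (hML : IsML H (fun n => ⇑(q n))) :
    ∀ n : ℕ, ∃ m : ℕ, ∃ hnm : n ≤ m,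
      Set.range (tbond H (fun k => ⇑(q k)) hnm) ⊆ Set.range (f n) := by
  choose N hN hst using hML
  set Q : ∀ k, H (k + 1) → H k := fun k => ⇑(q k) with hQ
  set S : ∀ j, Set (H j) := fun j => Set.range (tbond H Q (hN j).le) with hSdef
  have key : ∀ j, ∀ x ∈ S j, ∃ y ∈ S (j + 1), Q j y = x := by
    intro j x hx
    set M := max (N j) (N (j + 1)) + 1 with hM
    have hMj : N j < M := Nat.lt_succ_of_le (le_max_left _ _)
    have hMj1 : N (j + 1) < M := Nat.lt_succ_of_le (le_max_right _ _)
    have hx' : x ∈ Set.range (tbond H Q ((hN j).le.trans hMj.le)) := by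
      rw [hst j M hMj]; exact hx
    obtain ⟨w, hw⟩ := hx'
    have hj1M : j + 1 ≤ M := (hN (j + 1)).le.trans hMj1.le
    refine ⟨tbond H Q hj1M w, ?_, ?_⟩
    · show tbond H Q hj1M w ∈ Set.range (tbond H Q (hN (j + 1)).le)
      rw [← hst (j + 1) M hMj1]
      exact ⟨w, rfl⟩
    · rw [tbond_cons H Q hj1M w]
      exact hw
  intro n
  refine ⟨N n, (hN n).le, fun x hx => ?_⟩
  have hxS : x ∈ S n := hx
  obtain ⟨h, hcomp, hn⟩ := exists_thread H Q S key x hxS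
  obtain ⟨g, hg, hfg⟩ := hsurj h hcomp
  exact ⟨g n, by rw [hfg n, hn]⟩
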